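/- Let A be a finite-dimensional commutative associative unital algebra over ℝ, equipped with a complete algebra norm, and suppose A has a maximal ideal m such that the quotient A/m is two-dimensional as an ℝ-vector space (i.e., some residue field of A is ℂ). Then there exists a nonzero element w ∈ A with exp(w) = 1; in particular the exponential function exp : A → A is not injective, and there are infinitely many elements (the integer multiples of w) in the kernel of exp in this sense. -/

import Mathlib

open NormedSpace

/-- Auxiliary: in a commutative ring, if `f` is idempotent and `ν` is a nilpotent element of
the corner `fA`, then `f - ν` has an inverse in the corner algebra `fA` (with unit `f`). -/
lemma stmt15_inv {A : Type*} [CommRing A] (f : A) (hf : f * f = f) :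
    ∀ n : ℕ, ∀ ν : A, f * ν = ν → ν ^ (n + 1) = 0 →
      ∃ y, f * y = y ∧ (f - ν) * y = f := by
  intro n
  induction n with
  | zero =>
    intro ν hfν hν
    rw [pow_one] at hν
    exact ⟨f, hf, by rw [hν, sub_zero, hf]⟩
  | succ n ih =>
    intro ν hfν hν
    obtain ⟨y', hfy', hy'⟩ := ih (ν * ν) (by rw [← mul_assoc, hfν])
      (by
        have h1 : (ν * ν) ^ (n + 1) = ν ^ (n + 1 + 1) * ν ^ n := by ring
        rw [h1, hν, zero_mul])
    refine ⟨(f + ν) * y', ?_, ?_⟩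
    · have h2 : f * (f + ν) = f + ν := by rw [mul_add, hf, hfν]
      rw [← mul_assoc, h2]
    · linear_combination hy' + y' * hf

/-- Auxiliary: the Newton/Hensel step for the square root of `-f`. -/
lemma stmt15_step {A : Type*} [CommRing A] {f x Y : A} (hf : f * f = f) (hfx : f * x = x)
    (hinv : 2 * x * Y = f) : (x - (x ^ 2 + f) * Y) ^ 2 + f = (x ^ 2 + f) ^ 2 * Y ^ 2 := by
  linear_combination (-x) * hfx + (-1 : A) * hf + (-(x ^ 2 + f)) * hinv

/-- If a finite-dimensional commutative associative unital `ℝ`-algebra with a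
complete algebra norm has a maximal ideal whose residue field is two-dimensional over `ℝ`
(i.e. is `ℂ`), then there is a nonzero `w` with `exp w = 1`, all integer multiples of `w`
also satisfy this (so the "kernel" of `exp` is infinite), and `exp` is not injective. -/
theorem stmt15 (A : Type*) [NormedCommRing A] [NormedAlgebra ℝ A] [CompleteSpace A]
    [FiniteDimensional ℝ A]
    (m : Ideal A) (hm : m.IsMaximal) (hdim : Module.finrank ℝ (A ⧸ m) = 2) :
    ∃ w : A, w ≠ 0 ∧ exp w = 1 ∧ (∀ k : ℤ, exp (k • w) = 1) ∧
      {z : A | exp z = 1}.Infinite ∧ ¬ Function.Injective (exp : A → A) := by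
  haveI := hm
  haveI : Nontrivial (A ⧸ m) := Ideal.Quotient.nontrivial_iff.mpr hm.ne_top
  haveI : IsDomain (A ⧸ m) := Ideal.Quotient.isDomain m
  haveI : NoZeroSMulDivisors ℝ (A ⧸ m) :=
    inferInstance
  haveI : CharZero (A ⧸ m) := charZero_of_injective_algebraMap (algebraMap ℝ (A ⧸ m)).injective
  haveI : FiniteDimensional ℝ (A ⧸ m) :=
    Module.Finite.of_surjective (Ideal.Quotient.mkₐ ℝ m).toLinearMap
      Ideal.Quotient.mk_surjective
  haveI : Algebra.IsAlgebraic ℝ (A ⧸ m) := Algebra.IsAlgebraic.of_finite ℝ _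
  -- Part 1: an idempotent `e ∈ m` killing a power of `m` from the complementary corner.
  obtain ⟨e, f, N0, hem, hee, hf_def, hf, hNf⟩ :
      ∃ (e f : A) (N0 : ℕ), e ∈ m ∧ e * e = e ∧ f = 1 - e ∧ f * f = f ∧
        ∀ μ ∈ m, f * μ ^ (N0 + 1) = 0 := by
    haveI : IsArtinianRing A := isArtinian_of_tower ℝ inferInstance
    haveI : IsNoetherianRing A := isNoetherian_of_tower ℝ inferInstance
    obtain ⟨n, hn⟩ := IsArtinian.monotone_stabilizes
      (⟨fun k => OrderDual.toDual (m ^ k), fun a b hab => Ideal.pow_le_pow_right hab⟩ :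
        ℕ →o (Ideal A)ᵒᵈ)
    have hstab : m ^ (n + 1) = m ^ (n + 1 + 1) := by
      have e1 : m ^ n = m ^ (n + 1) := congrArg OrderDual.ofDual (hn (n + 1) (by omega))
      have e2 : m ^ n = m ^ (n + 1 + 1) := congrArg OrderDual.ofDual (hn (n + 1 + 1) (by omega))
      rw [← e1, ← e2]
    have hle : m ^ (n + 1) ≤ m • (m ^ (n + 1) : Ideal A) := by
      rw [Ideal.smul_eq_mul, ← pow_succ']
      exact le_of_eq hstab
    obtain ⟨r, hrm, hr⟩ := Submodule.exists_mem_and_smul_eq_self_of_fg_of_le_smul m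
      (m ^ (n + 1) : Ideal A) (IsNoetherian.noetherian _) hle
    have hpow : ∀ (k : ℕ) (x : A), x ∈ (m ^ (n + 1) : Ideal A) → r ^ k * x = x := by
      intro k
      induction k with
      | zero => intro x _; simp
      | succ k ih =>
        intro x hx
        have h1 : r * x = x := by have := hr x hx; rwa [smul_eq_mul] at this
        rw [pow_succ, mul_assoc, h1, ih x hx]
    have heidem : r ^ (n + 1) * r ^ (n + 1) = r ^ (n + 1) :=
      hpow (n + 1) _ (Ideal.pow_mem_pow hrm _)
    refine ⟨r ^ (n + 1), 1 - r ^ (n + 1), n, Ideal.pow_mem_of_mem m hrm _ (by omega),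
      heidem, rfl, by linear_combination heidem, ?_⟩
    intro μ hμ
    have h2 := hpow (n + 1) (μ ^ (n + 1)) (Ideal.pow_mem_pow hμ _)
    linear_combination -h2
  have hfpow : ∀ k : ℕ, f ^ (k + 1) = f := by
    intro k
    induction k with
    | zero => rw [pow_one]
    | succ k ih => rw [pow_succ, ih, hf]
  -- Part 2: a square root of `-1` in the residue field `A ⧸ m ≅ ℂ`.
  obtain ⟨u, hu2⟩ : ∃ u : A ⧸ m, u ^ 2 = -1 := by
    let φ : (A ⧸ m) →ₐ[ℝ] ℂ := IsAlgClosed.lift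
    have hinj : Function.Injective φ := by
      rw [injective_iff_map_eq_zero]
      intro a ha
      obtain ⟨x, rfl⟩ := Ideal.Quotient.mk_surjective a
      rw [Ideal.Quotient.eq_zero_iff_mem]
      by_contra hx
      obtain ⟨y, i, hi, hyi⟩ := hm.exists_inv hx
      have h0 : φ ((Ideal.Quotient.mk m) (y * x + i)) = 1 := by rw [hyi]; simp
      have h2 : φ ((Ideal.Quotient.mk m) i) = 0 := by
        rw [Ideal.Quotient.eq_zero_iff_mem.mpr hi, map_zero]
      simp only [map_add, map_mul, ha, h2, mul_zero, add_zero] at h0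
      exact zero_ne_one h0
    have hsurj : Function.Surjective φ.toLinearMap :=
      (LinearMap.injective_iff_surjective_of_finrank_eq_finrank
        (by rw [hdim, Complex.finrank_real_complex])).mp hinj
    obtain ⟨u, hu⟩ := hsurj Complex.I
    refine ⟨u, hinj ?_⟩
    have h1 : φ u = Complex.I := hu
    rw [map_pow, map_neg, map_one, h1, Complex.I_sq]
  obtain ⟨t, ht⟩ := Ideal.Quotient.mk_surjective u
  -- Part 3: Hensel's lemma inside the corner `fA`: an exact square root of `-f`.
  have key : ∀ (n : ℕ) (x : A), f * x = x → (x ^ 2 + f) ^ (n + 1) = 0 →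
      ∃ j : A, f * j = j ∧ j ^ 2 = -f := by
    intro n
    induction n with
    | zero =>
      intro x hfx hx
      rw [pow_one] at hx
      exact ⟨x, hfx, by linear_combination hx⟩
    | succ n ih =>
      intro x hfx hδ
      have hδm : (x ^ 2 + f) ∈ m :=
        hm.isPrime.mem_of_pow_mem _ (by rw [hδ]; exact m.zero_mem)
      have hmkf : Ideal.Quotient.mk m f = 1 := by
        rw [hf_def, map_sub, map_one, Ideal.Quotient.eq_zero_iff_mem.mpr hem, sub_zero]
      have hmkx2 : (Ideal.Quotient.mk m x) ^ 2 = -1 := by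
        have h0 : Ideal.Quotient.mk m (x ^ 2 + f) = 0 := Ideal.Quotient.eq_zero_iff_mem.mpr hδm
        rw [map_add, map_pow, hmkf] at h0
        linear_combination h0
      have h2x : (2 : A) * x ∉ m := by
        intro hmem
        have h0 : Ideal.Quotient.mk m ((2 : A) * x) = 0 :=
          Ideal.Quotient.eq_zero_iff_mem.mpr hmem
        rw [map_mul, map_ofNat] at h0
        rcases mul_eq_zero.mp h0 with h | h
        · exact two_ne_zero h
        · rw [h] at hmkx2
          simp at hmkx2
      obtain ⟨c', i, him, hci⟩ := hm.exists_inv h2x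
      have hμm : 1 - 2 * x * c' ∈ m := by
        have hi : 1 - 2 * x * c' = i := by linear_combination -hci
        rw [hi]; exact him
      have hfν : f * (f * (1 - 2 * x * c')) = f * (1 - 2 * x * c') := by
        rw [← mul_assoc, hf]
      have hν : (f * (1 - 2 * x * c')) ^ (N0 + 1) = 0 := by
        rw [mul_pow, hfpow N0]
        exact hNf _ hμm
      obtain ⟨y, hfy, hy⟩ := stmt15_inv f hf N0 _ hfν hν
      have hinv : 2 * x * (f * (c' * y)) = f := by linear_combination hy
      refine ih (x - (x ^ 2 + f) * (f * (c' * y))) ?_ ?_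
      · linear_combination hfx - (x ^ 2 + f) * c' * y * hf
      · have hstep := stmt15_step hf hfx hinv
        rw [hstep, mul_pow, ← pow_mul]
        have h2 : 2 * (n + 1) = (n + 1 + 1) + n := by ring
        rw [h2, pow_add, hδ, zero_mul, zero_mul]
  -- start Hensel from `f * t`
  have hfj0 : f * (f * t) = f * t := by rw [← mul_assoc, hf]
  have hδ0 : ((f * t) ^ 2 + f) ^ (N0 + 1) = 0 := by
    have hid : (f * t) ^ 2 + f = f * (t ^ 2 + 1) := by linear_combination t ^ 2 * hf
    have hμ0 : t ^ 2 + 1 ∈ m := by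
      rw [← Ideal.Quotient.eq_zero_iff_mem, map_add, map_pow, map_one, ht, hu2]
      ring
    rw [hid, mul_pow, hfpow N0]
    exact hNf _ hμ0
  obtain ⟨j, hfj, hj2⟩ := key N0 (f * t) hfj0 hδ0
  -- Part 4: nonvanishing
  have hfne : f ≠ 0 := by
    intro h
    apply hm.ne_top
    rw [Ideal.eq_top_iff_one]
    have he1 : e = 1 := by linear_combination hf_def - h
    rw [← he1]
    exact hem
  have hjne : j ≠ 0 := by
    intro h
    apply hfne
    rw [h] at hj2
    simpa using hj2.symm
  -- Part 5: the ring homomorphism `ψ : ℝ × ℂ →+* A`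
  have hef : e * f = 0 := by linear_combination (-1 : A) * hee + e * hf_def
  have hej : e * j = 0 := by linear_combination (-1 : A) * hfj + j * hf_def
  have hef1 : e + f = 1 := by linear_combination hf_def
  have hjj : j * j = -f := by linear_combination hj2
  set α := algebraMap ℝ A with hα
  have hcont : Continuous fun p : ℝ × ℂ => α p.1 * e + α p.2.re * f + α p.2.im * j :=
    ((((continuous_algebraMap ℝ A).comp continuous_fst).mul continuous_const).add
      (((continuous_algebraMap ℝ A).comp (Complex.continuous_re.comp continuous_snd)).mul
        continuous_const)).add
      (((continuous_algebraMap ℝ A).comp (Complex.continuous_im.comp continuous_snd)).mul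
        continuous_const)
  set ψ : ℝ × ℂ →+* A :=
    { toFun := fun p => α p.1 * e + α p.2.re * f + α p.2.im * j
      map_one' := by simp [Complex.one_re, Complex.one_im, hef1]
      map_mul' := by
        intro p q
        simp only [Prod.fst_mul, Prod.snd_mul, Complex.mul_re, Complex.mul_im, map_mul, map_sub,
          map_add]
        linear_combination (-(α p.1 * α q.1)) * hee + (-(α p.2.re * α q.2.re)) * hf
          + (-(α p.1 * α q.2.re + α p.2.re * α q.1)) * hef
          + (-(α p.1 * α q.2.im + α p.2.im * α q.1)) * hej
          + (-(α p.2.re * α q.2.im + α p.2.im * α q.2.re)) * hfj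
          + (-(α p.2.im * α q.2.im)) * hjj
      map_zero' := by simp
      map_add' := by
        intro p q
        simp only [Prod.fst_add, Prod.snd_add, Complex.add_re, Complex.add_im, map_add]
        ring } with hψ_def
  have hψ : ∀ p : ℝ × ℂ, ψ p = α p.1 * e + α p.2.re * f + α p.2.im * j := fun p => rfl
  have hψcont : Continuous ψ := hcont
  -- the element `w`
  set z : ℂ := 2 * (Real.pi : ℂ) * Complex.I with hz_def
  have hre : z.re = 0 := by simp [hz_def]
  have him : z.im = 2 * Real.pi := by simp [hz_def]
  set w : A := ψ (0, z) with hw_def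
  have hwval : w = α (2 * Real.pi) * j := by
    rw [hw_def, hψ, hre, him]
    simp
  have hwne : w ≠ 0 := by
    rw [hwval, hα, ← Algebra.smul_def]
    exact smul_ne_zero (by positivity) hjne
  -- exponential computation
  have hexp_psi : ∀ ζ : ℂ, exp (ψ (0, ζ)) = ψ (1, Complex.exp ζ) := by
    intro ζ
    letI : Algebra ℚ A := RestrictScalars.algebra ℚ ℝ A
    rw [← map_exp ψ hψcont]
    congr 1
    have h1 : (exp ((0 : ℝ), ζ)).1 = exp (0 : ℝ) := Prod.fst_exp _
    have h2 : (exp ((0 : ℝ), ζ)).2 = exp ζ := Prod.snd_exp _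
    have h3 : (exp ζ : ℂ) = Complex.exp ζ := by
      rw [Complex.exp_eq_exp_ℂ]
    ext
    · rw [h1, exp_zero]
    · rw [h2, h3]
  have hexpk : ∀ k : ℤ, exp (k • w) = 1 := by
    intro k
    have hk : k • w = ψ (0, (k : ℂ) * z) := by
      rw [hw_def, ← map_zsmul ψ]
      congr 1
      ext
      · simp
      · simp [zsmul_eq_mul]
    rw [hk, hexp_psi, hz_def, Complex.exp_int_mul_two_pi_mul_I, ← Prod.one_eq_mk, map_one]
  have hexp1 : exp w = 1 := by
    have := hexpk 1
    rwa [one_smul] at this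
  refine ⟨w, hwne, hexp1, hexpk, ?_, ?_⟩
  · apply Set.infinite_of_injective_forall_mem (f := fun k : ℤ => k • w)
    · intro a b hab
      by_contra hne
      have h0 : ((a - b : ℤ) : ℝ) • w = 0 := by
        rw [Int.cast_smul_eq_zsmul, sub_smul]
        simp only at hab
        rw [hab, sub_self]
      rcases smul_eq_zero.mp h0 with h | h
      · have : (a : ℝ) = (b : ℝ) := by
          have := sub_eq_zero.mp (by exact_mod_cast h : ((a : ℝ) - b) = 0)
          exact this
        exact hne (by exact_mod_cast this)
      · exact hwne h
    · intro k
      exact hexpk k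
  · intro hinj
    apply hwne
    apply hinj
    rw [hexp1, exp_zero]
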